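/- Let p be a prime and R an associative ring whose additive group has finite exponent p^m. If R is left p-nil (i.e., every element x with px = 0 satisfies xy = 0 for all y ∈ R), then R is nilpotent of class at most m, i.e., R^{m+1} = 0. -/

import Mathlib

/-- `listMul x l` is the product of `x` followed by the entries of `l`
(a product of `l.length + 1` ring elements). -/
def listMul {R : Type*} [NonUnitalRing R] : R → List R → R
  | x, [] => x
  | x, y :: l => listMul (x * y) l

/-- Let `p` be a prime and `R` an associative ring whose additive group has exponent
dividing `p^m`.  If `R` is left `p`-nil (every `x` with `p • x = 0` satisfies `x * y = 0`
for all `y`), then `R` is nilpotent of class at most `m`: every product of `m + 1`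
elements vanishes. -/
theorem left_pnil_ring_nilpotent {R : Type*} [NonUnitalRing R] (p m : ℕ)
    (hp : p.Prime)
    (hexp : ∀ x : R, (p ^ m) • x = 0)
    (hpnil : ∀ x : R, p • x = 0 → ∀ y : R, x * y = 0) :
    ∀ (x : R) (l : List R), l.length = m → listMul x l = 0 := by
  suffices h : ∀ (n : ℕ) (x : R), (p ^ n) • x = 0 → ∀ l : List R, l.length = n →
      listMul x l = 0 by
    intro x l hl
    exact h m x (hexp x) l hl
  intro n
  induction n with
  | zero =>
    intro x hx l hl
    rw [List.length_eq_zero_iff] at hl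
    subst hl
    simpa [listMul] using hx
  | succ n ih =>
    intro x hx l hl
    match l with
    | [] => simp at hl
    | y :: l' =>
      simp only [List.length_cons, Nat.succ.injEq] at hl
      have h1 : p • ((p ^ n) • x) = 0 := by
        rw [← smul_assoc]
        simpa [pow_succ, mul_comm] using hx
      have h2 : (p ^ n) • (x * y) = 0 := by
        have := hpnil _ h1 y
        rwa [smul_mul_assoc] at this
      exact ih (x * y) h2 l' hl
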